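/- For every odd integer n ≥ 5, every edge-friendly labeling f of the crown graph K_n × K_2 satisfies |v_f(0) − v_f(1)| ≤ 2n−8. -/

import Mathlib

open SimpleGraph

/-- The lexicographic product (composition) `G[H]`. -/
def lexProd {α β : Type*} (G : SimpleGraph α) (H : SimpleGraph β) :
    SimpleGraph (α × β) where
  Adj x y := G.Adj x.1 y.1 ∨ (x.1 = y.1 ∧ H.Adj x.2 y.2)
  symm := ⟨fun x y (h : G.Adj x.1 y.1 ∨ (x.1 = y.1 ∧ H.Adj x.2 y.2)) =>
    h.elim (fun h' => Or.inl h'.symm) (fun ⟨he, h2⟩ => Or.inr ⟨he.symm, h2.symm⟩)⟩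
  loopless := ⟨fun x (h : G.Adj x.1 x.1 ∨ (x.1 = x.1 ∧ H.Adj x.2 x.2)) =>
    h.elim (G.loopless.irrefl x.1) (fun ⟨_, h2⟩ => H.loopless.irrefl x.2 h2)⟩

/-- The direct (tensor, Kronecker) product `G × H`. -/
def tensorProd {α β : Type*} (G : SimpleGraph α) (H : SimpleGraph β) :
    SimpleGraph (α × β) where
  Adj x y := G.Adj x.1 y.1 ∧ H.Adj x.2 y.2
  symm := ⟨fun _ _ (⟨h1, h2⟩ : _ ∧ _) => ⟨h1.symm, h2.symm⟩⟩
  loopless := ⟨fun x (h : G.Adj x.1 x.1 ∧ H.Adj x.2 x.2) => G.loopless.irrefl x.1 h.1⟩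

/-- The number of edges labeled `i` by the edge labeling `f`. -/
noncomputable def edgeCount {V : Type*} (G : SimpleGraph V) (f : G.edgeSet → ZMod 2) (i : ZMod 2) : ℕ :=
  Nat.card {e : G.edgeSet // f e = i}

/-- The number of edges incident to `v` that are labeled `i` (the `i`-degree of `v`). -/
noncomputable def labDeg {V : Type*} (G : SimpleGraph V) (f : G.edgeSet → ZMod 2) (i : ZMod 2) (v : V) : ℕ :=
  Nat.card {e : G.edgeSet // f e = i ∧ v ∈ (e : Sym2 V)}

/-- The number of vertices whose induced (partial) label is `i`: those incident to strictly
more `i`-edges than `(1-i)`-edges. -/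
noncomputable def vertexCount {V : Type*} (G : SimpleGraph V) (f : G.edgeSet → ZMod 2) (i : ZMod 2) : ℕ :=
  Nat.card {v : V // labDeg G f (1 - i) v < labDeg G f i v}

/-- An edge labeling (a surjective function onto `ZMod 2`) is edge-friendly if
`|e_f(0) - e_f(1)| ≤ 1`. -/
def EdgeFriendly {V : Type*} (G : SimpleGraph V) (f : G.edgeSet → ZMod 2) : Prop :=
  Function.Surjective f ∧ |(edgeCount G f 0 : ℤ) - (edgeCount G f 1 : ℤ)| ≤ 1

/-- A graph is strongly edge-balanced if some edge-friendly labeling `f` satisfies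
`v_f(0) = v_f(1)` and `e_f(0) = e_f(1)`. -/
def StronglyEdgeBalanced {V : Type*} (G : SimpleGraph V) : Prop :=
  ∃ f : G.edgeSet → ZMod 2, EdgeFriendly G f ∧
    vertexCount G f 0 = vertexCount G f 1 ∧ edgeCount G f 0 = edgeCount G f 1

/-- `|v_f(0) - v_f(1)|` for an edge labeling `f`. -/
noncomputable def ebIndex {V : Type*} (G : SimpleGraph V) (f : G.edgeSet → ZMod 2) : ℕ :=
  ((vertexCount G f 0 : ℤ) - (vertexCount G f 1 : ℤ)).natAbs

/-- The edge-balanced index set of `G`. -/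
def EBI {V : Type*} (G : SimpleGraph V) : Set ℕ :=
  {k | ∃ f : G.edgeSet → ZMod 2, EdgeFriendly G f ∧ ebIndex G f = k}

/-- The crown graph `K_n × K_2`: the direct product of the complete graph on `n` vertices
with `K_2`; `(u,a)` is adjacent to `(v,b)` iff `u ≠ v` and `a ≠ b`. -/
def crown (n : ℕ) : SimpleGraph (Fin n × Fin 2) :=
  tensorProd (⊤ : SimpleGraph (Fin n)) (⊤ : SimpleGraph (Fin 2))

open Finset in
lemma crown_adj {n : ℕ} {x y : Fin n × Fin 2} :
    (crown n).Adj x y ↔ x.1 ≠ y.1 ∧ x.2 ≠ y.2 := Iff.rfl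

instance crownDec (n : ℕ) : DecidableRel (crown n).Adj := fun _ _ =>
  decidable_of_iff _ crown_adj.symm

open Finset in
lemma crown_degree (n : ℕ) (v : Fin n × Fin 2) : (crown n).degree v = n - 1 := by
  classical
  have h : (crown n).neighborFinset v = (({v.1}ᶜ : Finset (Fin n)) ×ˢ ({v.2}ᶜ : Finset (Fin 2))) := by
    ext w
    simp [crown_adj, Finset.mem_product, ne_comm, eq_comm]
  rw [SimpleGraph.degree, h, Finset.card_product, Finset.card_compl, Finset.card_compl]
  simp

open Finset in
lemma incid (n : ℕ) (v : Fin n × Fin 2) :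
    Nat.card {e : (crown n).edgeSet // v ∈ (e : Sym2 (Fin n × Fin 2))} = n - 1 := by
  classical
  rw [← crown_degree n v, ← card_incidenceSet_eq_degree, ← Nat.card_eq_fintype_card]
  apply Nat.card_congr
  exact (Equiv.subtypeSubtypeEquivSubtypeInter (fun e => e ∈ (crown n).edgeSet)
    (fun e => v ∈ e)).trans (Equiv.setCongr (rfl : _ = (crown n).incidenceSet v))

open Finset in
lemma one_endpoint (n : ℕ) (e : (crown n).edgeSet) (a : Fin 2) :
    (univ.filter (fun v : Fin n × Fin 2 => v.2 = a ∧ v ∈ (e : Sym2 (Fin n × Fin 2)))).card = 1 := by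
  classical
  obtain ⟨s, hs⟩ := e
  induction s using Sym2.ind with
  | _ x y =>
    rw [SimpleGraph.mem_edgeSet, crown_adj] at hs
    have h2 : ∀ (p q r : Fin 2), p ≠ q → r = p ∨ r = q := by decide
    rw [Finset.card_eq_one]
    rcases h2 x.2 y.2 a hs.2 with h | h
    · refine ⟨x, ?_⟩
      ext v
      simp only [Finset.mem_filter, Finset.mem_univ, true_and, Finset.mem_singleton,
        Sym2.mem_iff]
      constructor
      · rintro ⟨hv, rfl | rfl⟩
        · rfl
        · exact absurd (h.symm.trans hv.symm) hs.2
      · rintro rfl; exact ⟨h.symm, Or.inl rfl⟩ -- h : a = x.2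
    · refine ⟨y, ?_⟩
      ext v
      simp only [Finset.mem_filter, Finset.mem_univ, true_and, Finset.mem_singleton,
        Sym2.mem_iff]
      constructor
      · rintro ⟨hv, rfl | rfl⟩
        · exact absurd (hv.trans h) hs.2
        · rfl
      · rintro rfl; exact ⟨h.symm, Or.inr rfl⟩

open Finset in
lemma side_sum (n : ℕ) (f : (crown n).edgeSet → ZMod 2) (a : Fin 2) (k : ZMod 2) :
    ∑ v ∈ univ.filter (fun v : Fin n × Fin 2 => v.2 = a), labDeg (crown n) f k v
      = edgeCount (crown n) f k := by
  classical
  haveI : Fintype (crown n).edgeSet := Fintype.ofFinite _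
  have hlab : ∀ v, labDeg (crown n) f k v
      = (univ.filter (fun e : (crown n).edgeSet => f e = k ∧ v ∈ (e : Sym2 (Fin n × Fin 2)))).card := by
    intro v
    rw [labDeg, Nat.card_eq_fintype_card, Fintype.card_subtype]
  have hec : edgeCount (crown n) f k
      = (univ.filter (fun e : (crown n).edgeSet => f e = k)).card := by
    rw [edgeCount, Nat.card_eq_fintype_card, Fintype.card_subtype]
  simp only [hlab, hec, Finset.card_filter]
  rw [Finset.sum_comm]
  refine Finset.sum_congr rfl (fun e _ => ?_)
  by_cases h : f e = k
  · simp only [h, true_and, if_true]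
    rw [← Finset.card_filter, Finset.filter_filter]
    exact one_endpoint n e a
  · simp [h]

open Finset in
lemma deg_split (n : ℕ) (f : (crown n).edgeSet → ZMod 2) (i j : ZMod 2) (hij : i ≠ j)
    (v : Fin n × Fin 2) : labDeg (crown n) f i v + labDeg (crown n) f j v = n - 1 := by
  classical
  haveI : Fintype (crown n).edgeSet := Fintype.ofFinite _
  have hcov : ∀ x : ZMod 2, ¬ x = i ↔ x = j := by
    revert hij; revert i j; decide
  have hlab : ∀ k, labDeg (crown n) f k v
      = (((univ : Finset (crown n).edgeSet).filter
          (fun e : (crown n).edgeSet => v ∈ (e : Sym2 (Fin n × Fin 2)))).filter (fun e => f e = k)).card := by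
    intro k
    rw [labDeg, Nat.card_eq_fintype_card, Fintype.card_subtype, Finset.filter_filter]
    congr 1
    apply Finset.filter_congr
    intro e _
    tauto
  rw [hlab i, hlab j]
  have h2 := Finset.card_filter_add_card_filter_not
    (s := (univ : Finset (crown n).edgeSet).filter (fun e : (crown n).edgeSet => v ∈ (e : Sym2 (Fin n × Fin 2))))
    (p := fun e => f e = i)
  have h3 : ((univ : Finset (crown n).edgeSet).filter
          (fun e : (crown n).edgeSet => v ∈ (e : Sym2 (Fin n × Fin 2)))).filter (fun e => ¬ f e = i)
      = ((univ : Finset (crown n).edgeSet).filter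
          (fun e : (crown n).edgeSet => v ∈ (e : Sym2 (Fin n × Fin 2)))).filter (fun e => f e = j) := by
    apply Finset.filter_congr
    intro e _
    exact hcov (f e)
  rw [h3] at h2
  rw [h2]
  rw [← incid n v, Nat.card_eq_fintype_card, Fintype.card_subtype]

open Finset in
lemma side_card (n : ℕ) (a : Fin 2) :
    ((univ : Finset (Fin n × Fin 2)).filter (fun v => v.2 = a)).card = n := by
  classical
  have h : (univ : Finset (Fin n × Fin 2)).filter (fun v => v.2 = a)
      = (univ : Finset (Fin n)) ×ˢ ({a} : Finset (Fin 2)) := by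
    ext v
    simp only [Finset.mem_filter, Finset.mem_univ, true_and, Finset.mem_product,
      Finset.mem_singleton]
  rw [h, Finset.card_product]
  simp

open Finset in
lemma side_bound (n : ℕ) (hodd : Odd n) (hn : 5 ≤ n) (f : (crown n).edgeSet → ZMod 2)
    (hbal : |(edgeCount (crown n) f 0 : ℤ) - (edgeCount (crown n) f 1 : ℤ)| ≤ 1)
    (i j : ZMod 2) (hij : i ≠ j) (a : Fin 2) :
    ((univ.filter (fun v : Fin n × Fin 2 => v.2 = a ∧ labDeg (crown n) f j v < labDeg (crown n) f i v)).card : ℤ)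
      - ((univ.filter (fun v : Fin n × Fin 2 => v.2 = a ∧ labDeg (crown n) f i v < labDeg (crown n) f j v)).card : ℤ)
      ≤ (n : ℤ) - 4 := by
  classical
  set d : ZMod 2 → Fin n × Fin 2 → ℕ := labDeg (crown n) f with hd
  -- n - 1 is even and ≥ 4
  obtain ⟨m, hm⟩ := hodd
  have hn1 : (n : ℤ) - 1 = 2 * m := by omega
  have hdeg : ∀ v : Fin n × Fin 2, d i v + d j v = n - 1 := deg_split n f i j hij
  have hdegZ : ∀ v : Fin n × Fin 2, (d i v : ℤ) + d j v = (n : ℤ) - 1 := by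
    intro v
    have := hdeg v
    omega
  -- the signed sum over the side is e_i - e_j
  have hsumZ : ∑ v ∈ univ.filter (fun v : Fin n × Fin 2 => v.2 = a), ((d i v : ℤ) - d j v)
      = (edgeCount (crown n) f i : ℤ) - edgeCount (crown n) f j := by
    rw [Finset.sum_sub_distrib]
    rw [← Nat.cast_sum, ← Nat.cast_sum, side_sum n f a i, side_sum n f a j]
  -- each term is even
  have heven : ∀ v : Fin n × Fin 2, (2 : ℤ) ∣ ((d i v : ℤ) - d j v) := by
    intro v
    have h1 := hdegZ v
    have h2 : (d i v : ℤ) - d j v = 2 * d i v - (2 * m) := by omega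
    omega
  have hdvd : (2 : ℤ) ∣ ((edgeCount (crown n) f i : ℤ) - edgeCount (crown n) f j) := by
    rw [← hsumZ]
    exact Finset.dvd_sum (fun v _ => heven v)
  have habs : |(edgeCount (crown n) f i : ℤ) - edgeCount (crown n) f j| ≤ 1 := by
    have hcase : ∀ i j : ZMod 2, i ≠ j → (i = 0 ∧ j = 1) ∨ (i = 1 ∧ j = 0) := by decide
    rcases hcase i j hij with ⟨hi, hj⟩ | ⟨hi, hj⟩
    · rw [hi, hj]; exact hbal
    · rw [hi, hj, abs_sub_comm]; exact hbal
  have hzero : ∑ v ∈ univ.filter (fun v : Fin n × Fin 2 => v.2 = a), ((d i v : ℤ) - d j v) = 0 := by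
    rw [hsumZ]
    rw [abs_le] at habs
    omega
  -- split the side into three parts
  set S := univ.filter (fun v : Fin n × Fin 2 => v.2 = a) with hS
  set p : Fin n × Fin 2 → Prop := fun v => d j v < d i v with hp
  set q : Fin n × Fin 2 → Prop := fun v => d i v < d j v with hq
  rw [← Finset.sum_filter_add_sum_filter_not S p] at hzero
  rw [← Finset.sum_filter_add_sum_filter_not (S.filter (fun v => ¬ p v)) q] at hzero
  have hthird : ∑ v ∈ ((S.filter (fun v => ¬ p v)).filter (fun v => ¬ q v)),
      ((d i v : ℤ) - d j v) = 0 := by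
    apply Finset.sum_eq_zero
    intro v hv
    simp only [Finset.mem_filter, hp, hq] at hv
    have : d i v = d j v := by omega
    rw [this]; ring
  rw [hthird, add_zero] at hzero
  -- second filter simplification
  have hqp : (S.filter (fun v => ¬ p v)).filter q = S.filter q := by
    rw [Finset.filter_filter]
    apply Finset.filter_congr
    intro v _
    simp only [hp, hq]
    constructor
    · tauto
    · intro h; exact ⟨by omega, h⟩
  rw [hqp] at hzero
  set cA := (S.filter p).card with hcA
  set cB := (S.filter q).card with hcB
  -- lower bounds
  have hA : (cA : ℤ) * 2 ≤ ∑ v ∈ S.filter p, ((d i v : ℤ) - d j v) := by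
    rw [hcA]
    have := Finset.card_nsmul_le_sum (S.filter p) (fun v => ((d i v : ℤ) - d j v)) 2
      (fun v hv => by
        show (2 : ℤ) ≤ (d i v : ℤ) - d j v
        simp only [Finset.mem_filter, hp] at hv
        have h1 := heven v
        have h2 : (0 : ℤ) < (d i v : ℤ) - d j v := by
          have := hv.2; omega
        omega)
    simpa [nsmul_eq_mul, mul_comm] using this
  have hB : (cB : ℤ) * (-(((n : ℤ) - 1))) ≤ ∑ v ∈ S.filter q, ((d i v : ℤ) - d j v) := by
    rw [hcB]
    have := Finset.card_nsmul_le_sum (S.filter q) (fun v => ((d i v : ℤ) - d j v)) (-((n : ℤ) - 1))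
      (fun v _ => by
        show -((n : ℤ) - 1) ≤ (d i v : ℤ) - d j v
        have h1 := hdegZ v
        have h2 : (0 : ℤ) ≤ d i v := Int.natCast_nonneg _
        omega)
    simpa [nsmul_eq_mul, mul_comm] using this
  have hkey : 2 * (cA : ℤ) ≤ ((n : ℤ) - 1) * cB := by nlinarith
  -- cA + cB ≤ n
  have hcard : cA + cB ≤ n := by
    have hdisj : Disjoint (S.filter p) (S.filter q) := by
      rw [Finset.disjoint_left]
      intro v hv hv'
      simp only [Finset.mem_filter, hp, hq] at hv hv'
      omega
    have := Finset.card_union_of_disjoint hdisj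
    have hsub : (S.filter p) ∪ (S.filter q) ⊆ S :=
      Finset.union_subset (Finset.filter_subset _ _) (Finset.filter_subset _ _)
    have := Finset.card_le_card hsub
    rw [Finset.card_union_of_disjoint hdisj] at this
    rw [hcA, hcB]
    calc (S.filter p).card + (S.filter q).card ≤ S.card := this
    _ = n := by rw [hS]; exact side_card n a
  -- rewrite the goal filters
  have hApcard : (univ.filter (fun v : Fin n × Fin 2 => v.2 = a ∧ d j v < d i v)).card = cA := by
    rw [hcA, hS, Finset.filter_filter]
  have hBpcard : (univ.filter (fun v : Fin n × Fin 2 => v.2 = a ∧ d i v < d j v)).card = cB := by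
    rw [hcB, hS, Finset.filter_filter]
  rw [hApcard, hBpcard]
  -- final arithmetic
  have hcardZ : (cA : ℤ) + cB ≤ n := by exact_mod_cast hcard
  rcases le_or_gt (cB : ℤ) 1 with h | h
  · nlinarith [Int.natCast_nonneg cB, Int.natCast_nonneg cA]
  · nlinarith [Int.natCast_nonneg cB, Int.natCast_nonneg cA]

open Finset in
theorem crown_odd_upper_bound (n : ℕ) (hodd : Odd n) (hn : 5 ≤ n) :
    ∀ f : (crown n).edgeSet → ZMod 2, EdgeFriendly (crown n) f →
      ebIndex (crown n) f ≤ 2 * n - 8 := by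
  classical
  intro f hf
  have hbal := hf.2
  -- vertexCount as a filter card
  have hvc : ∀ i j : ZMod 2, (1 - i) = j → vertexCount (crown n) f i
      = (univ.filter (fun v : Fin n × Fin 2 =>
          labDeg (crown n) f j v < labDeg (crown n) f i v)).card := by
    intro i j hj
    rw [vertexCount, hj, Nat.card_eq_fintype_card, Fintype.card_subtype]
  -- split a vertex filter by side
  have hsplit : ∀ p : Fin n × Fin 2 → Prop, ∀ _ : DecidablePred p,
      (univ.filter p).card
        = (univ.filter (fun v => v.2 = 0 ∧ p v)).card
          + (univ.filter (fun v => v.2 = 1 ∧ p v)).card := by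
    intro p _
    have hd : Disjoint (univ.filter (fun v : Fin n × Fin 2 => v.2 = 0 ∧ p v))
        (univ.filter (fun v => v.2 = 1 ∧ p v)) := by
      rw [Finset.disjoint_left]
      intro v hv hv'
      simp only [Finset.mem_filter] at hv hv'
      rw [hv.2.1] at hv'
      exact absurd hv'.2.1 (by decide)
    rw [← Finset.card_union_of_disjoint hd]
    congr 1
    ext v
    simp only [Finset.mem_filter, Finset.mem_univ, true_and, Finset.mem_union]
    have h2 : v.2 = 0 ∨ v.2 = 1 := by omega
    tauto
  have h01 : vertexCount (crown n) f 0
      = (univ.filter (fun v : Fin n × Fin 2 => v.2 = 0 ∧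
          labDeg (crown n) f 1 v < labDeg (crown n) f 0 v)).card
        + (univ.filter (fun v : Fin n × Fin 2 => v.2 = 1 ∧
          labDeg (crown n) f 1 v < labDeg (crown n) f 0 v)).card := by
    rw [hvc 0 1 (by decide)]; exact hsplit _ _
  have h10 : vertexCount (crown n) f 1
      = (univ.filter (fun v : Fin n × Fin 2 => v.2 = 0 ∧
          labDeg (crown n) f 0 v < labDeg (crown n) f 1 v)).card
        + (univ.filter (fun v : Fin n × Fin 2 => v.2 = 1 ∧
          labDeg (crown n) f 0 v < labDeg (crown n) f 1 v)).card := by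
    rw [hvc 1 0 (by decide)]; exact hsplit _ _
  have hb1 := side_bound n hodd hn f hbal 0 1 (by decide) 0
  have hb2 := side_bound n hodd hn f hbal 0 1 (by decide) 1
  have hb3 := side_bound n hodd hn f hbal 1 0 (by decide) 0
  have hb4 := side_bound n hodd hn f hbal 1 0 (by decide) 1
  rw [ebIndex, h01, h10]
  have hnz : (5 : ℤ) ≤ n := by exact_mod_cast hn
  push_cast
  omega
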